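/- Let d ≥ 1 be an integer, let v, v_* ∈ ℝ^d with |v| < 1 and |v_*| < 1, let ε ∈ [−1,1], and let i ∈ {1,…,d}. Write v = (v_1,…,v_d) and v_* = (v_{1,*},…,v_{d,*}), and define μ = ((1 − v·v_*)/(1 − |v|²)) · ((1 + ε v_i)/(1 + ε v_{i,*})) and μ̃ = (√(1 − |v_*|²)/√(1 − |v|²)) · ((1 + ε v_i)/(1 + ε v_{i,*})). Then μ ≥ (μ̃² + 1)/2. -/
import Mathlib


open scoped BigOperators

noncomputable section

/-- Euclidean dot product on `Fin d → ℝ`. -/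
def dotp {d : ℕ} (v w : Fin d → ℝ) : ℝ := ∑ i, v i * w i

/-- Squared Euclidean norm on `Fin d → ℝ`. -/
def nsq {d : ℕ} (v : Fin d → ℝ) : ℝ := ∑ i, (v i) ^ 2

/-- Euclidean norm on `Fin d → ℝ`. -/
def nrm {d : ℕ} (v : Fin d → ℝ) : ℝ := Real.sqrt (nsq v)

lemma nsq_nonneg {d : ℕ} (v : Fin d → ℝ) : 0 ≤ nsq v :=
  Finset.sum_nonneg fun _ _ => sq_nonneg _

lemma nsq_lt_one {d : ℕ} {v : Fin d → ℝ} (h : nrm v < 1) : nsq v < 1 := by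
  by_contra hc
  push_neg at hc
  have := Real.one_le_sqrt.mpr hc
  unfold nrm at h; linarith

lemma coord_sq_le {d : ℕ} (v : Fin d → ℝ) (i : Fin d) : (v i) ^ 2 ≤ nsq v :=
  Finset.single_le_sum (f := fun j => (v j) ^ 2) (fun j _ => sq_nonneg _)
    (Finset.mem_univ i)

set_option maxHeartbeats 800000 in
/-- Let `d ≥ 1`, `v, v_* ∈ ℝ^d` with `|v| < 1`, `|v_*| < 1`,
`ε ∈ [−1,1]`, `i ∈ {1,…,d}`. With
`μ = ((1 − v·v_*)/(1 − |v|²))·((1 + ε v_i)/(1 + ε v_{i,*}))` and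
`μ̃ = (√(1 − |v_*|²)/√(1 − |v|²))·((1 + ε v_i)/(1 + ε v_{i,*}))`,
one has `μ ≥ (μ̃² + 1)/2`. -/
theorem minimum_entropy_stmt4 (d : ℕ) (hd : 1 ≤ d)
    (v vs : Fin d → ℝ) (hv : nrm v < 1) (hvs : nrm vs < 1)
    (ε : ℝ) (hε : ε ∈ Set.Icc (-1 : ℝ) 1) (i : Fin d) :
    (((Real.sqrt (1 - nsq vs) / Real.sqrt (1 - nsq v)) *
        ((1 + ε * v i) / (1 + ε * vs i))) ^ 2 + 1) / 2 ≤
      ((1 - dotp v vs) / (1 - nsq v)) * ((1 + ε * v i) / (1 + ε * vs i)) := by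
  obtain ⟨hε1, hε2⟩ := hε
  set A := 1 - nsq v with hAdef
  set B := 1 - nsq vs with hBdef
  set p := 1 + ε * v i with hpdef
  set q := 1 + ε * vs i with hqdef
  set c := dotp v vs with hcdef
  have hA : 0 < A := by have := nsq_lt_one hv; linarith
  have hB : 0 < B := by have := nsq_lt_one hvs; linarith
  have hεabs : |ε| ≤ 1 := abs_le.mpr ⟨hε1, hε2⟩
  have hvi : |v i| < 1 := by
    have h1 : (v i) ^ 2 < 1 := lt_of_le_of_lt (coord_sq_le v i) (nsq_lt_one hv)
    nlinarith [abs_nonneg (v i), sq_abs (v i)]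
  have hvsi : |vs i| < 1 := by
    have h1 : (vs i) ^ 2 < 1 := lt_of_le_of_lt (coord_sq_le vs i) (nsq_lt_one hvs)
    nlinarith [abs_nonneg (vs i), sq_abs (vs i)]
  have hp : 0 < p := by
    have : |ε * v i| < 1 := by
      rw [abs_mul]
      calc |ε| * |v i| ≤ 1 * |v i| := by
            exact mul_le_mul_of_nonneg_right hεabs (abs_nonneg _)
        _ < 1 := by simpa using hvi
    have := abs_lt.mp this
    simp only [hpdef]; linarith [this.1]
  have hq : 0 < q := by
    have : |ε * vs i| < 1 := by
      rw [abs_mul]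
      calc |ε| * |vs i| ≤ 1 * |vs i| := by
            exact mul_le_mul_of_nonneg_right hεabs (abs_nonneg _)
        _ < 1 := by simpa using hvsi
    have := abs_lt.mp this
    simp only [hqdef]; linarith [this.1]
  -- key inequality: B p² + A q² ≤ 2 (1-c) p q
  have expand : nsq (fun j => p * vs j - q * v j)
      = p ^ 2 * nsq vs + q ^ 2 * nsq v - 2 * p * q * c := by
    simp only [nsq, dotp, hcdef, Finset.mul_sum, ← Finset.sum_add_distrib,
      ← Finset.sum_sub_distrib]
    exact Finset.sum_congr rfl fun j _ => by ring
  have hcomp : ((fun j => p * vs j - q * v j) i) = vs i - v i := by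
    simp only [hpdef, hqdef]; ring
  have hsq : (p - q) ^ 2 ≤ nsq (fun j => p * vs j - q * v j) := by
    have h1 : (vs i - v i) ^ 2 ≤ nsq (fun j => p * vs j - q * v j) := by
      have h := coord_sq_le (fun j => p * vs j - q * v j) i
      have heq : p * vs i - q * v i = vs i - v i := by
        simp only [hpdef, hqdef]; ring
      simpa [heq] using h
    have h2 : (p - q) ^ 2 = ε ^ 2 * (v i - vs i) ^ 2 := by
      simp only [hpdef, hqdef]; ring
    have h3 : ε ^ 2 ≤ 1 := by nlinarith
    nlinarith [sq_nonneg (v i - vs i)]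
  have key : B * p ^ 2 + A * q ^ 2 ≤ 2 * (1 - c) * p * q := by
    rw [expand] at hsq
    simp only [hAdef, hBdef]
    nlinarith
  -- reduce the goal
  have hsqB : (Real.sqrt B / Real.sqrt A) ^ 2 = B / A := by
    rw [div_pow, Real.sq_sqrt hB.le, Real.sq_sqrt hA.le]
  rw [mul_pow, hsqB]
  have hD : 0 < A * q ^ 2 := by positivity
  have hne : (A * q ^ 2 : ℝ) ≠ 0 := hD.ne'
  have hD2 : (0:ℝ) < A * q ^ 2 * 2 := by positivity
  have hDq : (0:ℝ) < A * q := by positivity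
  rw [div_pow, div_mul_div_comm, div_mul_div_comm,
    div_add' _ _ _ hne, div_div, div_le_div_iff₀ hD2 hDq]
  nlinarith [mul_le_mul_of_nonneg_right key hDq.le]
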